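/- Let d ≡ 1 (mod 4) be a positive non-square integer, let ω_d = (1+√d)/2, and let ω_d = [a_0; a_1, a_2, …] be its simple continued fraction expansion, with n-th convergent p_n/q_n (with the convention q_{−1} = 0) and n-th total quotient α_n = [a_n; a_{n+1}, …]. Set ν_n = |p_n² − p_n·q_n − q_n²·(d−1)/4|. Then for every n ≥ 0 there is a real number δ_n with α_{n+1} = √d/ν_n − q_{n−1}/q_n + δ_n and |δ_n| < 4/(√d·q_n²); in particular α_{n+1} < √d/ν_n for every n ≥ 0. -/

import Mathlib

/-- The `n`-th total quotient `α_n` of the continued fraction expansion of `θ`: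
`α_0 = θ`, `α_{n+1} = 1/(α_n - ⌊α_n⌋)`. -/
noncomputable def cfAlpha (θ : ℝ) : ℕ → ℝ
  | 0 => θ
  | n + 1 => 1 / Int.fract (cfAlpha θ n)

/-- The `n`-th partial quotient `a_n` of the continued fraction expansion of `θ`. -/
noncomputable def cfA (θ : ℝ) (n : ℕ) : ℤ := ⌊cfAlpha θ n⌋

/-- Numerators of the convergents of `θ`, shifted by two:
`cfP θ (n+2) = p_n`, with `p_{-2} = 0`, `p_{-1} = 1`, `p_n = a_n p_{n-1} + p_{n-2}`. -/
noncomputable def cfP (θ : ℝ) : ℕ → ℤ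
  | 0 => 0
  | 1 => 1
  | n + 2 => cfA θ n * cfP θ (n + 1) + cfP θ n

/-- Denominators of the convergents of `θ`, shifted by two:
`cfQ θ (n+2) = q_n`, with `q_{-2} = 1`, `q_{-1} = 0`, `q_n = a_n q_{n-1} + q_{n-2}`. -/
noncomputable def cfQ (θ : ℝ) : ℕ → ℤ
  | 0 => 1
  | 1 => 0
  | n + 2 => cfA θ n * cfQ θ (n + 1) + cfQ θ n

namespace CFaux

variable {θ : ℝ}

lemma alpha_irrational (hθ : Irrational θ) : ∀ n, Irrational (cfAlpha θ n)
  | 0 => hθ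
  | n + 1 => by
    have h := alpha_irrational hθ n
    have hf : Irrational (Int.fract (cfAlpha θ n)) := by
      rw [← Int.self_sub_floor]; exact h.sub_intCast _
    simpa [cfAlpha, one_div] using hf.inv

lemma fract_pos (hθ : Irrational θ) (n : ℕ) : 0 < Int.fract (cfAlpha θ n) := by
  have h : Irrational (Int.fract (cfAlpha θ n)) := by
    rw [← Int.self_sub_floor]; exact (alpha_irrational hθ n).sub_intCast _
  exact lt_of_le_of_ne (Int.fract_nonneg _) (Ne.symm h.ne_zero)

lemma one_lt_alpha (hθ : Irrational θ) (n : ℕ) : 1 < cfAlpha θ (n + 1) := by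
  have h : cfAlpha θ (n + 1) = 1 / Int.fract (cfAlpha θ n) := rfl
  rw [h]
  exact one_lt_one_div (fract_pos hθ n) (Int.fract_lt_one _)

lemma alpha_rel (hθ : Irrational θ) (n : ℕ) :
    cfAlpha θ (n + 1) * (cfAlpha θ n - cfA θ n) = 1 := by
  have h : cfAlpha θ (n + 1) = 1 / Int.fract (cfAlpha θ n) := rfl
  have hf : Int.fract (cfAlpha θ n) ≠ 0 := (fract_pos hθ n).ne'
  rw [h, cfA, Int.self_sub_floor]
  exact one_div_mul_cancel hf

lemma key (hθ : Irrational θ) : ∀ n : ℕ,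
    θ * (cfAlpha θ n * (cfQ θ (n + 1) : ℝ) + (cfQ θ n : ℝ)) =
      cfAlpha θ n * (cfP θ (n + 1) : ℝ) + (cfP θ n : ℝ) := by
  intro n
  induction n with
  | zero => simp [cfAlpha, cfP, cfQ]
  | succ n ih =>
    have hrel := alpha_rel hθ n
    simp only [cfP, cfQ]
    push_cast
    linear_combination (cfAlpha θ (n+1)) * ih -
      (θ * (cfQ θ (n+1) : ℝ) - (cfP θ (n+1) : ℝ)) * hrel

lemma det : ∀ n : ℕ, cfP θ (n + 1) * cfQ θ n - cfP θ n * cfQ θ (n + 1) = (-1) ^ n := by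
  intro n
  induction n with
  | zero => simp [cfP, cfQ]
  | succ n ih =>
    simp only [cfP, cfQ, pow_succ]
    linear_combination (-1 : ℤ) * ih

lemma one_le_A (hθ : Irrational θ) (n : ℕ) : 1 ≤ cfA θ (n + 1) := by
  rw [cfA, Int.le_floor]
  exact_mod_cast (one_lt_alpha hθ n).le

lemma Q_facts (hθ : Irrational θ) : ∀ n : ℕ, 1 ≤ cfQ θ (n + 2) ∧ 0 ≤ cfQ θ (n + 1) := by
  intro n
  induction n with
  | zero => simp [cfQ]
  | succ n ih =>
    obtain ⟨h1, h2⟩ := ih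
    have ha := one_le_A hθ n
    constructor
    · show 1 ≤ cfA θ (n + 1) * cfQ θ (n + 2) + cfQ θ (n + 1)
      nlinarith
    · linarith

lemma P_facts (hθ : Irrational θ) (hθ1 : 1 ≤ θ) : ∀ n : ℕ, 1 ≤ cfP θ (n + 1) := by
  have h0 : 1 ≤ cfA θ 0 := by
    rw [cfA, Int.le_floor]
    exact_mod_cast hθ1
  have H : ∀ n : ℕ, 1 ≤ cfP θ (n + 1) ∧ 0 ≤ cfP θ n := by
    intro n
    induction n with
    | zero => simp [cfP]
    | succ n ih =>
      obtain ⟨h1, h2⟩ := ih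
      have ha : 1 ≤ cfA θ n := by
        cases n with
        | zero => exact h0
        | succ m => exact one_le_A hθ m
      constructor
      · show 1 ≤ cfA θ n * cfP θ (n + 1) + cfP θ n
        nlinarith
      · linarith
  exact fun n => (H n).1

lemma Erel (hθ : Irrational θ) (n : ℕ) :
    cfAlpha θ (n + 1) * ((cfP θ (n + 2) : ℝ) - (cfQ θ (n + 2) : ℝ) * θ) =
      -((cfP θ (n + 1) : ℝ) - (cfQ θ (n + 1) : ℝ) * θ) := by
  linear_combination -(key hθ (n + 1))

lemma Esign (hθ : Irrational θ) : ∀ n : ℕ,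
    0 < (-1 : ℝ) ^ n * ((cfP θ (n + 1) : ℝ) - (cfQ θ (n + 1) : ℝ) * θ) := by
  intro n
  induction n with
  | zero => simp [cfP, cfQ]
  | succ n ih =>
    have h := Erel hθ n
    have hα : (0 : ℝ) < cfAlpha θ (n + 1) := lt_trans one_pos (one_lt_alpha hθ n)
    have h2 : cfAlpha θ (n + 1) *
        ((-1 : ℝ) ^ n * ((cfP θ (n + 2) : ℝ) - (cfQ θ (n + 2) : ℝ) * θ)) =
        -((-1 : ℝ) ^ n * ((cfP θ (n + 1) : ℝ) - (cfQ θ (n + 1) : ℝ) * θ)) := by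
      linear_combination ((-1 : ℝ) ^ n) * h
    rw [pow_succ]
    nlinarith [h2, ih, hα]

lemma EboundLe (hθ : Irrational θ) : ∀ n : ℕ,
    |(cfP θ (n + 1) : ℝ) - (cfQ θ (n + 1) : ℝ) * θ| ≤ 1 := by
  intro n
  induction n with
  | zero => simp [cfP, cfQ]
  | succ n ih =>
    have h := Erel hθ n
    have hα : (1 : ℝ) < cfAlpha θ (n + 1) := one_lt_alpha hθ n
    have hα0 : (0 : ℝ) < cfAlpha θ (n + 1) := lt_trans one_pos hα
    have habs : cfAlpha θ (n + 1) * |(cfP θ (n + 2) : ℝ) - (cfQ θ (n + 2) : ℝ) * θ| =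
        |(cfP θ (n + 1) : ℝ) - (cfQ θ (n + 1) : ℝ) * θ| := by
      rw [← abs_of_pos hα0, ← abs_mul, h, abs_neg]
    nlinarith [abs_nonneg ((cfP θ (n + 2) : ℝ) - (cfQ θ (n + 2) : ℝ) * θ)]

lemma Elt (hθ : Irrational θ) (n : ℕ) :
    |(cfP θ (n + 2) : ℝ) - (cfQ θ (n + 2) : ℝ) * θ| < 1 := by
  have h := Erel hθ n
  have hα : (1 : ℝ) < cfAlpha θ (n + 1) := one_lt_alpha hθ n
  have hα0 : (0 : ℝ) < cfAlpha θ (n + 1) := lt_trans one_pos hα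
  have habs : cfAlpha θ (n + 1) * |(cfP θ (n + 2) : ℝ) - (cfQ θ (n + 2) : ℝ) * θ| =
      |(cfP θ (n + 1) : ℝ) - (cfQ θ (n + 1) : ℝ) * θ| := by
    rw [← abs_of_pos hα0, ← abs_mul, h, abs_neg]
  have hle := EboundLe hθ n
  nlinarith [abs_nonneg ((cfP θ (n + 2) : ℝ) - (cfQ θ (n + 2) : ℝ) * θ)]

end CFaux

/-- for a positive non-square integer `d ≡ 1 (mod 4)` and `ω_d = (1+√d)/2`,
with `ν_n = |p_n² - p_n q_n - q_n² (d-1)/4|`, for every `n ≥ 0` there is `δ_n` with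
`α_{n+1} = √d/ν_n - q_{n-1}/q_n + δ_n`, `|δ_n| < 4/(√d q_n²)`;
in particular `α_{n+1} < √d/ν_n`. -/
theorem stmt_1 (d : ℕ) (hd : 0 < d) (hns : ¬ IsSquare d) (hd4 : d % 4 = 1) (n : ℕ) :
    (∃ δ : ℝ,
        cfAlpha ((1 + Real.sqrt d) / 2) (n + 1) =
          Real.sqrt d /
              ((|cfP ((1 + Real.sqrt d) / 2) (n + 2) ^ 2
                  - cfP ((1 + Real.sqrt d) / 2) (n + 2) * cfQ ((1 + Real.sqrt d) / 2) (n + 2)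
                  - cfQ ((1 + Real.sqrt d) / 2) (n + 2) ^ 2 * (((d : ℤ) - 1) / 4)| : ℤ) : ℝ)
            - (cfQ ((1 + Real.sqrt d) / 2) (n + 1) : ℝ)
              / (cfQ ((1 + Real.sqrt d) / 2) (n + 2) : ℝ) + δ ∧
        |δ| < 4 / (Real.sqrt d * (cfQ ((1 + Real.sqrt d) / 2) (n + 2) : ℝ) ^ 2)) ∧
    cfAlpha ((1 + Real.sqrt d) / 2) (n + 1) <
      Real.sqrt d /
        ((|cfP ((1 + Real.sqrt d) / 2) (n + 2) ^ 2
            - cfP ((1 + Real.sqrt d) / 2) (n + 2) * cfQ ((1 + Real.sqrt d) / 2) (n + 2)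
            - cfQ ((1 + Real.sqrt d) / 2) (n + 2) ^ 2 * (((d : ℤ) - 1) / 4)| : ℤ) : ℝ) := by
  set s : ℝ := Real.sqrt d with hsdef
  set ω : ℝ := (1 + s) / 2 with hωdef
  -- basic numeric facts
  have hd1 : d ≠ 1 := fun h => hns (h ▸ IsSquare.one)
  have hd5 : 5 ≤ d := by omega
  have hs2d : s ^ 2 = (d : ℝ) := Real.sq_sqrt (by positivity)
  have hs0 : 0 ≤ s := by rw [hsdef]; positivity
  have hdR : (5 : ℝ) ≤ (d : ℝ) := by exact_mod_cast hd5
  have hs2 : 2 < s := by nlinarith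
  have hspos : 0 < s := by linarith
  have hω1 : 1 < ω := by rw [hωdef]; linarith
  have hirr : Irrational ω := by
    have hs' : Irrational s := irrational_sqrt_natCast_iff.mpr hns
    have h2 := ((hs'.intCast_add 1).div_intCast (m := 2) (by norm_num))
    rw [hωdef]
    simpa using h2
  -- integer m and its cast
  have hm4 : 4 * (((d : ℤ) - 1) / 4) = (d : ℤ) - 1 := by omega
  -- facts about convergents, stated raw
  have hq2i : 1 ≤ cfQ ω (n + 2) := (CFaux.Q_facts hirr n).1
  have hq1i : 0 ≤ cfQ ω (n + 1) := (CFaux.Q_facts hirr n).2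
  have hp1i : 1 ≤ cfP ω (n + 1) := CFaux.P_facts hirr hω1.le n
  have hα_rel := CFaux.Erel hirr n
  have hE2sign := CFaux.Esign hirr (n + 1)
  have hE2lt := CFaux.Elt hirr n
  have hdetZ := CFaux.det (θ := ω) (n + 1)
  -- abbreviations
  set m : ℤ := ((d : ℤ) - 1) / 4 with hmdef
  set p1 : ℤ := cfP ω (n + 1) with hp1def
  set p2 : ℤ := cfP ω (n + 2) with hp2def
  set q1 : ℤ := cfQ ω (n + 1) with hq1def
  set q2 : ℤ := cfQ ω (n + 2) with hq2def
  set α : ℝ := cfAlpha ω (n + 1) with hαdef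
  set σ : ℝ := (-1 : ℝ) ^ (n + 1) with hσdef
  set E1 : ℝ := (p1 : ℝ) - (q1 : ℝ) * ω with hE1def
  set E2 : ℝ := (p2 : ℝ) - (q2 : ℝ) * ω with hE2def
  set E1' : ℝ := (p1 : ℝ) - (q1 : ℝ) * ((1 - s) / 2) with hE1'def
  set E2' : ℝ := (p2 : ℝ) - (q2 : ℝ) * ((1 - s) / 2) with hE2'def
  set Nint : ℤ := p2 ^ 2 - p2 * q2 - q2 ^ 2 * m with hNdef
  set v : ℝ := ((|Nint| : ℤ) : ℝ) with hvdef
  clear_value v Nint E2' E1' E2 E1 σ α q2 q1 p2 p1 m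
  -- derived numeric facts
  have hmR : (m : ℝ) = ((d : ℝ) - 1) / 4 := by
    have h4 : ((4 * m : ℤ) : ℝ) = (((d : ℤ) - 1 : ℤ) : ℝ) := by rw [hm4]
    push_cast at h4
    linarith
  have hσsq : σ * σ = 1 := by
    rw [hσdef, ← pow_add]
    simp [← two_mul, pow_mul]
  have hq2R : (1 : ℝ) ≤ (q2 : ℝ) := by exact_mod_cast hq2i
  have hq1R : (0 : ℝ) ≤ (q1 : ℝ) := by exact_mod_cast hq1i
  have hp1R : (1 : ℝ) ≤ (p1 : ℝ) := by exact_mod_cast hp1i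
  have hq2pos : (0 : ℝ) < (q2 : ℝ) := lt_of_lt_of_le one_pos hq2R
  have hq2ne : (q2 : ℝ) ≠ 0 := hq2pos.ne'
  have hE2gt : -1 < E2 := neg_lt_of_abs_lt hE2lt
  have hE2lt1 : E2 < 1 := lt_of_abs_lt hE2lt
  have hq2s : 2 ≤ (q2 : ℝ) * s := by nlinarith
  have hE2'eq : E2' = E2 + (q2 : ℝ) * s := by rw [hE2'def, hE2def, hωdef]; ring
  have hE2'gt : (q2 : ℝ) * s - 1 < E2' := by rw [hE2'eq]; linarith
  have hE2'pos : 0 < E2' := by linarith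
  have hE1'pos : 0 < E1' := by
    have h1 : (q1 : ℝ) * ((1 - s) / 2) ≤ 0 :=
      mul_nonpos_of_nonneg_of_nonpos hq1R (by linarith)
    rw [hE1'def]
    linarith
  have hE2ne : E2 ≠ 0 := by
    intro h
    rw [h, mul_zero] at hE2sign
    exact lt_irrefl _ hE2sign
  have hdetR : (p2 : ℝ) * (q1 : ℝ) - (p1 : ℝ) * (q2 : ℝ) = σ := by
    rw [hσdef]
    exact_mod_cast hdetZ
  have hprod : E2 * E2' = (Nint : ℝ) := by
    rw [hE2def, hE2'def, hωdef, hNdef]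
    push_cast
    rw [hmR]
    linear_combination (-((q2 : ℝ) ^ 2) / 4) * hs2d
  have hNsign : 0 < σ * (E2 * E2') := by
    calc (0 : ℝ) < (σ * E2) * E2' := mul_pos hE2sign hE2'pos
    _ = σ * (E2 * E2') := by ring
  have hv : v = σ * (E2 * E2') := by
    rw [hvdef, Int.cast_abs, ← hprod]
    rcases Nat.even_or_odd (n + 1) with he | ho
    · have h1 : σ = 1 := by rw [hσdef]; exact he.neg_one_pow
      rw [h1, one_mul] at hNsign ⊢
      exact abs_of_pos hNsign
    · have h1 : σ = -1 := by rw [hσdef]; exact ho.neg_one_pow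
      rw [h1] at hNsign ⊢
      rw [abs_of_neg (by linarith)]
      ring
  have hvpos : 0 < v := by rw [hv]; exact hNsign
  have hvne : v ≠ 0 := hvpos.ne'
  -- main identity pieces
  have hαval : α = -E1 / E2 := by
    rw [eq_div_iff hE2ne]
    linear_combination hα_rel
  have eq2 : -E1 / E2 - (-E1') / E2' = σ * s / (E2 * E2') := by
    rw [div_sub_div _ _ hE2ne hE2'pos.ne']
    congr 1
    rw [hE1def, hE1'def, hE2def, hE2'def, hωdef]
    linear_combination s * hdetR
  have hEEne : E2 * E2' ≠ 0 := mul_ne_zero hE2ne hE2'pos.ne'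
  have eq3 : σ * s / (E2 * E2') = s / v := by
    rw [hv, div_eq_div_iff hEEne (by rw [← hv]; exact hvne)]
    linear_combination s * (E2 * E2') * hσsq
  have eq4 : (-E1') / E2' + (q1 : ℝ) / (q2 : ℝ) = σ / ((q2 : ℝ) * E2') := by
    rw [div_add_div _ _ hE2'pos.ne' hq2ne,
      div_eq_div_iff (mul_ne_zero hE2'pos.ne' hq2ne) (mul_ne_zero hq2ne hE2'pos.ne')]
    rw [hE1'def, hE2'def]
    linear_combination ((q2 : ℝ) * ((p2 : ℝ) - (q2 : ℝ) * ((1 - s) / 2))) * hdetR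
  have hfinal : α = s / v - (q1 : ℝ) / (q2 : ℝ) + σ / ((q2 : ℝ) * E2') := by
    rw [hαval]
    linarith [eq2, eq3, eq4]
  have hσabs : |σ| = 1 := by
    rw [hσdef, abs_pow, abs_neg, abs_one, one_pow]
  have hδabs : |σ / ((q2 : ℝ) * E2')| = 1 / ((q2 : ℝ) * E2') := by
    rw [abs_div, hσabs, abs_of_pos (mul_pos hq2pos hE2'pos)]
  have hδlt : |σ / ((q2 : ℝ) * E2')| < 4 / (s * (q2 : ℝ) ^ 2) := by
    rw [hδabs, div_lt_div_iff₀ (mul_pos hq2pos hE2'pos)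
      (mul_pos hspos (pow_pos hq2pos 2))]
    have hkey : (0 : ℝ) ≤ (q2 : ℝ) * ((q2 : ℝ) * s - 2) :=
      mul_nonneg (by linarith) (by linarith)
    have h1 : (q2 : ℝ) * ((q2 : ℝ) * s - 1) < (q2 : ℝ) * E2' :=
      mul_lt_mul_of_pos_left hE2'gt hq2pos
    linarith [h1, hkey, hq2pos]
  have hβneg : (-E1') / E2' < 0 := div_neg_of_neg_of_pos (by linarith) hE2'pos
  refine ⟨⟨σ / ((q2 : ℝ) * E2'), hfinal, hδlt⟩, ?_⟩
  have hlt : α = s / v + (-E1') / E2' := by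
    rw [hαval]
    linarith [eq2, eq3]
  rw [hlt]
  linarith
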